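/- Let n ≥ 1 and 0 ≤ b < n. There exists a constant C > 0 depending only on n and b such that for every r > 0 and every x ∈ ℝ^n \ {0}, (1/r^n) ∫_{B_r} |x+z|^{-b} dz ≤ C |x|^{-b}. -/

import Mathlib

open MeasureTheory Metric Set

theorem aux_scale {n : ℕ} (b : ℝ) (hb : 0 ≤ b) {R : ℝ} (hR : 0 < R) :
    ∫⁻ y in ball (0 : EuclideanSpace ℝ (Fin n)) R, ENNReal.ofReal (‖y‖ ^ (-b)) =
    ENNReal.ofReal (R ^ n) * (ENNReal.ofReal (R ^ (-b)) *
      ∫⁻ y in ball (0 : EuclideanSpace ℝ (Fin n)) 1, ENNReal.ofReal (‖y‖ ^ (-b))) := by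
  set E := EuclideanSpace ℝ (Fin n)
  have hmeas : Measurable fun y : E => ENNReal.ofReal (‖y‖ ^ (-b)) := by
    measurability
  have hmap := Measure.map_addHaar_smul (volume : Measure E) (r := R) hR.ne'
  have hdim : Module.finrank ℝ E = n := finrank_euclideanSpace_fin
  rw [hdim] at hmap
  have hpre : ((R • ·) : E → E) ⁻¹' ball 0 R = ball (0 : E) 1 := by
    ext z
    simp only [mem_preimage, mem_ball, dist_zero_right, norm_smul, Real.norm_eq_abs,
      abs_of_pos hR]
    constructor
    · intro h; nlinarith [norm_nonneg z]
    · intro h; nlinarith [norm_nonneg z]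
  have h1 : ∫⁻ y in ball (0:E) R, ENNReal.ofReal (‖y‖ ^ (-b)) ∂(Measure.map (R • ·) volume)
      = ∫⁻ z in ball (0:E) 1, ENNReal.ofReal (‖R • z‖ ^ (-b)) := by
    rw [setLIntegral_map measurableSet_ball hmeas (measurable_const_smul R), hpre]
  have h2 : ∫⁻ z in ball (0:E) 1, ENNReal.ofReal (‖R • z‖ ^ (-b))
      = ENNReal.ofReal (R ^ (-b)) * ∫⁻ y in ball (0:E) 1, ENNReal.ofReal (‖y‖ ^ (-b)) := by
    rw [← lintegral_const_mul _ hmeas]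
    refine setLIntegral_congr_fun measurableSet_ball (fun z _ => ?_)
    rw [norm_smul, Real.norm_eq_abs, abs_of_pos hR,
      Real.mul_rpow hR.le (norm_nonneg z), ENNReal.ofReal_mul (Real.rpow_nonneg hR.le _)]
  have h3 : ∫⁻ y in ball (0:E) R, ENNReal.ofReal (‖y‖ ^ (-b)) ∂(Measure.map (R • ·) volume)
      = ENNReal.ofReal (|(R ^ n)⁻¹|) * ∫⁻ y in ball (0:E) R, ENNReal.ofReal (‖y‖ ^ (-b)) := by
    rw [hmap, Measure.restrict_smul, lintegral_smul_measure, smul_eq_mul]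
  rw [h3, h2] at h1
  have hRn : (0:ℝ) < R ^ n := pow_pos hR n
  have hcancel : ENNReal.ofReal (R ^ n) * ENNReal.ofReal (|(R ^ n)⁻¹|) = 1 := by
    rw [← ENNReal.ofReal_mul hRn.le, abs_inv, abs_of_pos hRn, mul_inv_cancel₀ hRn.ne', ENNReal.ofReal_one]
  calc ∫⁻ y in ball (0:E) R, ENNReal.ofReal (‖y‖ ^ (-b))
      = (ENNReal.ofReal (R ^ n) * ENNReal.ofReal (|(R ^ n)⁻¹|)) *
        ∫⁻ y in ball (0:E) R, ENNReal.ofReal (‖y‖ ^ (-b)) := by rw [hcancel, one_mul]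
    _ = ENNReal.ofReal (R ^ n) * (ENNReal.ofReal (|(R ^ n)⁻¹|) *
        ∫⁻ y in ball (0:E) R, ENNReal.ofReal (‖y‖ ^ (-b))) := by rw [mul_assoc]
    _ = _ := by rw [← h1]


theorem aux_fin {n : ℕ} (hn : 1 ≤ n) (b : ℝ) (hb : 0 ≤ b) (hb' : b < n) :
    ∫⁻ y in ball (0 : EuclideanSpace ℝ (Fin n)) 1, ENNReal.ofReal (‖y‖ ^ (-b)) < ⊤ := by
  set E := EuclideanSpace ℝ (Fin n)
  haveI : Nontrivial E := by
    have h : Module.finrank ℝ E = n := finrank_euclideanSpace_fin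
    exact Module.nontrivial_of_finrank_pos (R := ℝ) (by omega : 0 < Module.finrank ℝ E)
  have hmeas : Measurable fun y : E => ENNReal.ofReal (‖y‖ ^ (-b)) := by measurability
  set ρ : ℕ → ℝ := fun k => (2⁻¹ : ℝ) ^ k with hρ
  have hρpos : ∀ k, 0 < ρ k := fun k => pow_pos (by norm_num) k
  set A : ℕ → Set E := fun k => ball (0 : E) (ρ k) \ ball (0 : E) (ρ (k + 1)) with hA
  -- covering
  have hcover : ball (0 : E) 1 ⊆ {(0 : E)} ∪ ⋃ k, A k := by
    intro y hy
    rcases eq_or_ne y 0 with rfl | hy0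
    · exact Or.inl rfl
    right
    have hy1 : ‖y‖ < 1 := by simpa [mem_ball, dist_zero_right] using hy
    have hypos : 0 < ‖y‖ := norm_pos_iff.2 hy0
    have hex : ∃ m, ρ (m + 1) ≤ ‖y‖ := by
      obtain ⟨m, hm⟩ := exists_pow_lt_of_lt_one hypos (by norm_num : (2⁻¹ : ℝ) < 1)
      exact ⟨m, le_trans (pow_le_pow_of_le_one (by norm_num) (by norm_num) (by omega)) hm.le⟩
    classical
    refine mem_iUnion.2 ⟨Nat.find hex, ?_⟩
    have hk1 : ρ (Nat.find hex + 1) ≤ ‖y‖ := Nat.find_spec hex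
    have hk2 : ‖y‖ < ρ (Nat.find hex) := by
      rcases Nat.eq_zero_or_pos (Nat.find hex) with hk0 | hk0
      · rw [hk0]; simpa [hρ] using hy1
      · have h2 := Nat.find_min hex (m := Nat.find hex - 1) (by omega)
        have h3 : ‖y‖ < ρ (Nat.find hex - 1 + 1) := lt_of_not_ge h2
        rwa [Nat.sub_add_cancel hk0] at h3
    simp only [hA, mem_diff, mem_ball, dist_zero_right, not_lt]
    exact ⟨hk2, hk1⟩
  have hV : volume (ball (0:E) 1) < ⊤ := measure_ball_lt_top
  set V := volume (ball (0:E) 1) with hVdef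
  set q : ℝ := (2:ℝ) ^ (b - (n:ℝ)) with hq
  have hq0 : 0 ≤ q := Real.rpow_nonneg (by norm_num) _
  have hq1 : q < 1 := by
    refine Real.rpow_lt_one_of_one_lt_of_neg one_lt_two ?_
    linarith
  have hrho : ∀ m : ℕ, ρ m = (2:ℝ) ^ (-(m:ℝ)) := by
    intro m
    show (2⁻¹:ℝ) ^ m = _
    rw [inv_pow, ← Real.rpow_natCast 2 m, ← Real.rpow_neg (by norm_num : (0:ℝ) ≤ 2)]
  have halg : ∀ k : ℕ, (ρ (k+1) : ℝ) ^ (-b) * ρ k ^ n = (2:ℝ) ^ b * q ^ k := by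
    intro k
    rw [hrho, hrho, hq,
      ← Real.rpow_natCast ((2:ℝ) ^ (-((k:ℝ)))) n, ← Real.rpow_natCast ((2:ℝ) ^ (b - (n:ℝ))) k,
      ← Real.rpow_mul (by norm_num : (0:ℝ) ≤ 2), ← Real.rpow_mul (by norm_num : (0:ℝ) ≤ 2),
      ← Real.rpow_mul (by norm_num : (0:ℝ) ≤ 2),
      ← Real.rpow_add (by norm_num : (0:ℝ) < 2), ← Real.rpow_add (by norm_num : (0:ℝ) < 2)]
    congr 1
    push_cast
    ring
  have hterm : ∀ k : ℕ, ∫⁻ y in A k, ENNReal.ofReal (‖y‖ ^ (-b))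
      ≤ (ENNReal.ofReal ((2:ℝ) ^ b) * V) * (ENNReal.ofReal q) ^ k := by
    intro k
    have hbound : ∀ y ∈ A k, ENNReal.ofReal (‖y‖ ^ (-b)) ≤ ENNReal.ofReal (ρ (k+1) ^ (-b)) := by
      intro y hy
      have h1 : ρ (k+1) ≤ ‖y‖ := by
        have h2 := hy.2
        simp only [mem_ball, dist_zero_right, not_lt] at h2
        exact h2
      exact ENNReal.ofReal_le_ofReal
        (Real.rpow_le_rpow_of_nonpos (hρpos (k+1)) h1 (neg_nonpos.2 hb))
    have hmb : volume (A k) ≤ ENNReal.ofReal (ρ k ^ n) * V := by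
      have h3 : volume (A k) ≤ volume (ball (0:E) (ρ k)) := measure_mono diff_subset
      rwa [Measure.addHaar_ball volume (0:E) (hρpos k).le, finrank_euclideanSpace_fin] at h3
    calc ∫⁻ y in A k, ENNReal.ofReal (‖y‖ ^ (-b))
        ≤ ∫⁻ _ in A k, ENNReal.ofReal (ρ (k+1) ^ (-b)) := setLIntegral_mono measurable_const hbound
      _ = ENNReal.ofReal (ρ (k+1) ^ (-b)) * volume (A k) := setLIntegral_const _ _
      _ ≤ ENNReal.ofReal (ρ (k+1) ^ (-b)) * (ENNReal.ofReal (ρ k ^ n) * V) := by gcongr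
      _ = (ENNReal.ofReal ((2:ℝ) ^ b) * V) * (ENNReal.ofReal q) ^ k := by
          rw [← mul_assoc, ← ENNReal.ofReal_mul (Real.rpow_nonneg (hρpos (k+1)).le _), halg k,
            ENNReal.ofReal_mul (Real.rpow_nonneg (by norm_num) _), ENNReal.ofReal_pow hq0]
          ring
  have hsum : ∫⁻ y in ball (0:E) 1, ENNReal.ofReal (‖y‖ ^ (-b))
      ≤ (ENNReal.ofReal ((2:ℝ) ^ b) * V) * (1 - ENNReal.ofReal q)⁻¹ := by
    calc ∫⁻ y in ball (0:E) 1, ENNReal.ofReal (‖y‖ ^ (-b))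
        ≤ ∫⁻ y in ({(0:E)} ∪ ⋃ k, A k), ENNReal.ofReal (‖y‖ ^ (-b)) :=
          lintegral_mono_set hcover
      _ ≤ (∫⁻ y in ({(0:E)} : Set E), ENNReal.ofReal (‖y‖ ^ (-b)))
          + ∫⁻ y in (⋃ k, A k), ENNReal.ofReal (‖y‖ ^ (-b)) := lintegral_union_le _ _ _
      _ = ∫⁻ y in (⋃ k, A k), ENNReal.ofReal (‖y‖ ^ (-b)) := by
          rw [setLIntegral_measure_zero _ _ (measure_singleton _), zero_add]
      _ ≤ ∑' k, ∫⁻ y in A k, ENNReal.ofReal (‖y‖ ^ (-b)) := lintegral_iUnion_le _ _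
      _ ≤ ∑' k, (ENNReal.ofReal ((2:ℝ) ^ b) * V) * (ENNReal.ofReal q) ^ k :=
          ENNReal.tsum_le_tsum hterm
      _ = (ENNReal.ofReal ((2:ℝ) ^ b) * V) * ∑' k, (ENNReal.ofReal q) ^ k :=
          ENNReal.tsum_mul_left
      _ = (ENNReal.ofReal ((2:ℝ) ^ b) * V) * (1 - ENNReal.ofReal q)⁻¹ := by
          rw [ENNReal.tsum_geometric]
  refine lt_of_le_of_lt hsum ?_
  have h4 : (1 - ENNReal.ofReal q)⁻¹ < ⊤ := by
    rw [ENNReal.inv_lt_top]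
    exact tsub_pos_iff_lt.2 (by simpa using ENNReal.ofReal_lt_one.2 hq1)
  exact ENNReal.mul_lt_top (ENNReal.mul_lt_top ENNReal.ofReal_lt_top hV) h4

/-- Averaged translation estimate for the power weight `|x|^{-b}`, with `0 ≤ b < n`. -/
theorem stmt_2 {n : ℕ} (hn : 1 ≤ n) (b : ℝ) (hb : 0 ≤ b) (hb' : b < n) :
    ∃ C : ℝ, 0 < C ∧ ∀ r : ℝ, 0 < r →
      ∀ x : EuclideanSpace ℝ (Fin n), x ≠ 0 →
        (ENNReal.ofReal (r ^ n))⁻¹ *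
          ∫⁻ z in Metric.ball (0 : EuclideanSpace ℝ (Fin n)) r,
            ENNReal.ofReal (‖x + z‖ ^ (-b)) ≤
        ENNReal.ofReal (C * ‖x‖ ^ (-b)) := by
  classical
  set E := EuclideanSpace ℝ (Fin n)
  haveI : Nontrivial E := by
    have h : Module.finrank ℝ E = n := finrank_euclideanSpace_fin
    exact Module.nontrivial_of_finrank_pos (R := ℝ) (by omega : 0 < Module.finrank ℝ E)
  have hmeas : Measurable fun y : E => ENNReal.ofReal (‖y‖ ^ (-b)) := by measurability
  set I₁ := ∫⁻ y in ball (0 : E) 1, ENNReal.ofReal (‖y‖ ^ (-b)) with hI₁def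
  have hfin : I₁ < ⊤ := aux_fin hn b hb hb'
  set I₁r := I₁.toReal with hI₁rdef
  have hI₁r0 : 0 ≤ I₁r := ENNReal.toReal_nonneg
  have hI₁ofReal : I₁ = ENNReal.ofReal I₁r := (ENNReal.ofReal_toReal hfin.ne).symm
  set V := volume (ball (0 : E) 1) with hVdef
  have hVfin : V < ⊤ := measure_ball_lt_top
  set Vr := V.toReal with hVrdef
  have hVr0 : 0 < Vr :=
    ENNReal.toReal_pos (measure_ball_pos volume (0:E) one_pos).ne' hVfin.ne
  have hVofReal : V = ENNReal.ofReal Vr := (ENNReal.ofReal_toReal hVfin.ne).symm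
  set C2 : ℝ := (3:ℝ) ^ n * (3:ℝ) ^ (-b) * (2:ℝ) ^ b * I₁r with hC2def
  have hC20 : 0 ≤ C2 :=
    mul_nonneg (mul_nonneg (mul_nonneg (by positivity) (Real.rpow_nonneg (by norm_num) _))
      (Real.rpow_nonneg (by norm_num) _)) hI₁r0
  refine ⟨(2:ℝ) ^ b * Vr + C2, ?_, ?_⟩
  · have : (0:ℝ) < (2:ℝ) ^ b * Vr := mul_pos (Real.rpow_pos_of_pos two_pos b) hVr0
    linarith
  intro r hr x hx
  set C : ℝ := (2:ℝ) ^ b * Vr + C2 with hCdef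
  have hxpos : 0 < ‖x‖ := norm_pos_iff.2 hx
  have hx0 : 0 ≤ ‖x‖ ^ (-b) := Real.rpow_nonneg (norm_nonneg x) _
  have h2b : (2⁻¹:ℝ) ^ (-b) = (2:ℝ) ^ b := by
    rw [Real.inv_rpow (by norm_num), Real.rpow_neg (by norm_num), inv_inv]
  have hhalf : ((‖x‖/2 : ℝ)) ^ (-b) = (2:ℝ) ^ b * ‖x‖ ^ (-b) := by
    rw [div_eq_mul_inv, Real.mul_rpow (norm_nonneg x) (by norm_num), h2b]; ring
  have hrn : (0:ℝ) < r ^ n := pow_pos hr n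
  have hrn0 : (ENNReal.ofReal (r ^ n)) ≠ 0 := (ENNReal.ofReal_pos.2 hrn).ne'
  have hcancel : ∀ X : ENNReal,
      (ENNReal.ofReal (r ^ n))⁻¹ * (ENNReal.ofReal (r ^ n) * X) = X := by
    intro X
    rw [← mul_assoc, ENNReal.inv_mul_cancel hrn0 ENNReal.ofReal_ne_top, one_mul]
  -- translation
  have htrans : ∫⁻ z in ball (0:E) r, ENNReal.ofReal (‖x + z‖ ^ (-b))
      = ∫⁻ y in ball x r, ENNReal.ofReal (‖y‖ ^ (-b)) := by
    have hpre : ((x + ·) : E → E) ⁻¹' ball x r = ball (0:E) r := by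
      ext z
      simp [mem_ball, dist_eq_norm, add_sub_cancel_left]
    have h := (measurePreserving_add_left (volume : Measure E) x).setLIntegral_comp_preimage_emb
      (MeasurableEquiv.addLeft x).measurableEmbedding
      (fun y => ENNReal.ofReal (‖y‖ ^ (-b))) (ball x r)
    rw [hpre] at h
    exact h
  have hballVol : volume (ball x r) = ENNReal.ofReal (r ^ n) * V := by
    rw [Measure.addHaar_ball volume x hr.le, finrank_euclideanSpace_fin]
  rcases le_or_gt r (‖x‖ / 2) with hcase | hcase
  · -- r small
    have hpt : ∀ y ∈ ball x r,
        ENNReal.ofReal (‖y‖ ^ (-b)) ≤ ENNReal.ofReal ((‖x‖/2) ^ (-b)) := by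
      intro y hy
      have h1 : ‖x‖ - ‖y‖ ≤ ‖x - y‖ := norm_sub_norm_le x y
      have h2 : ‖x - y‖ < r := by
        rw [norm_sub_rev]
        simpa [mem_ball, dist_eq_norm] using hy
      have h3 : ‖x‖/2 ≤ ‖y‖ := by linarith
      exact ENNReal.ofReal_le_ofReal
        (Real.rpow_le_rpow_of_nonpos (by linarith) h3 (neg_nonpos.2 hb))
    calc (ENNReal.ofReal (r ^ n))⁻¹ * ∫⁻ z in ball (0:E) r, ENNReal.ofReal (‖x + z‖ ^ (-b))
        = (ENNReal.ofReal (r ^ n))⁻¹ * ∫⁻ y in ball x r, ENNReal.ofReal (‖y‖ ^ (-b)) := by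
          rw [htrans]
      _ ≤ (ENNReal.ofReal (r ^ n))⁻¹ *
          (ENNReal.ofReal (r ^ n) * (ENNReal.ofReal ((‖x‖/2) ^ (-b)) * V)) := by
          gcongr
          calc ∫⁻ y in ball x r, ENNReal.ofReal (‖y‖ ^ (-b))
              ≤ ∫⁻ _ in ball x r, ENNReal.ofReal ((‖x‖/2) ^ (-b)) :=
                setLIntegral_mono measurable_const hpt
            _ = ENNReal.ofReal ((‖x‖/2) ^ (-b)) * volume (ball x r) := setLIntegral_const _ _
            _ = ENNReal.ofReal (r ^ n) * (ENNReal.ofReal ((‖x‖/2) ^ (-b)) * V) := by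
                rw [hballVol]; ring
      _ = ENNReal.ofReal ((‖x‖/2) ^ (-b)) * V := hcancel _
      _ = ENNReal.ofReal ((‖x‖/2) ^ (-b) * Vr) := by
          rw [hVofReal, ← ENNReal.ofReal_mul (Real.rpow_nonneg (by positivity) _)]
      _ ≤ ENNReal.ofReal (C * ‖x‖ ^ (-b)) := by
          apply ENNReal.ofReal_le_ofReal
          rw [hhalf, hCdef]
          nlinarith [mul_nonneg hC20 hx0]
  · -- r large
    have h3r : (0:ℝ) < 3 * r := by linarith
    have hsub : ball x r ⊆ ball (0:E) (3*r) := by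
      intro y hy
      have h1 : ‖y - x‖ < r := by simpa [mem_ball, dist_eq_norm] using hy
      have h2 : ‖y‖ ≤ ‖y - x‖ + ‖x‖ := by
        calc ‖y‖ = ‖(y - x) + x‖ := by rw [sub_add_cancel]
          _ ≤ ‖y - x‖ + ‖x‖ := norm_add_le _ _
      simp only [mem_ball, dist_zero_right]
      linarith
    calc (ENNReal.ofReal (r ^ n))⁻¹ * ∫⁻ z in ball (0:E) r, ENNReal.ofReal (‖x + z‖ ^ (-b))
        = (ENNReal.ofReal (r ^ n))⁻¹ * ∫⁻ y in ball x r, ENNReal.ofReal (‖y‖ ^ (-b)) := by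
          rw [htrans]
      _ ≤ (ENNReal.ofReal (r ^ n))⁻¹ * ∫⁻ y in ball (0:E) (3*r), ENNReal.ofReal (‖y‖ ^ (-b)) := by
          gcongr
      _ = (ENNReal.ofReal (r ^ n))⁻¹ *
          (ENNReal.ofReal ((3*r) ^ n) * (ENNReal.ofReal ((3*r) ^ (-b)) * I₁)) := by
          rw [aux_scale b hb h3r]
      _ = (ENNReal.ofReal (r ^ n))⁻¹ *
          (ENNReal.ofReal (r ^ n) *
            (ENNReal.ofReal ((3:ℝ) ^ n) * (ENNReal.ofReal ((3*r) ^ (-b)) * I₁))) := by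
          rw [mul_pow, ENNReal.ofReal_mul (by positivity : (0:ℝ) ≤ (3:ℝ) ^ n)]
          ring
      _ = ENNReal.ofReal ((3:ℝ) ^ n) * (ENNReal.ofReal ((3*r) ^ (-b)) * I₁) := hcancel _
      _ ≤ ENNReal.ofReal ((3:ℝ) ^ n) * (ENNReal.ofReal ((3*(‖x‖/2)) ^ (-b)) * I₁) := by
          refine mul_le_mul_right (mul_le_mul_left (ENNReal.ofReal_le_ofReal ?_) I₁) _
          exact Real.rpow_le_rpow_of_nonpos (by positivity) (by linarith) (neg_nonpos.2 hb)
      _ = ENNReal.ofReal ((3:ℝ) ^ n * ((3*(‖x‖/2)) ^ (-b) * I₁r)) := by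
          rw [hI₁ofReal, ← ENNReal.ofReal_mul (Real.rpow_nonneg (by positivity) _),
            ← ENNReal.ofReal_mul (by positivity : (0:ℝ) ≤ (3:ℝ) ^ n)]
      _ ≤ ENNReal.ofReal (C * ‖x‖ ^ (-b)) := by
          apply ENNReal.ofReal_le_ofReal
          have hmr : ((3:ℝ)*(‖x‖/2)) ^ (-b) = (3:ℝ) ^ (-b) * ((‖x‖/2) ^ (-b)) :=
            Real.mul_rpow (by norm_num) (by positivity)
          rw [hmr, hhalf, hCdef, hC2def]
          have h5 : (0:ℝ) ≤ (2:ℝ) ^ b * Vr * (‖x‖ ^ (-b)) :=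
            mul_nonneg (mul_nonneg (Real.rpow_nonneg (by norm_num) _) hVr0.le) hx0
          nlinarith
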